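/- Under the assumptions of Theorem 4.6 (Hessian of E is M-Lipschitz with eigenvalue moduli in [μ,L] on U(x*,δ); perturbation E_δ with ∇E_δ, ∇²E_δ ε-small and ∇²E_δ ε-Lipschitz; ε ≤ min{μ/2, μ²/(32M), μδ/12, M}), the surrogate E_NN = E + E_δ satisfies on the ball U(x*_NN, 2δ/3): (i) ‖∇²E_NN(x) − ∇²E_NN(y)‖₂ ≤ 2M‖x−y‖₂; (ii) every eigenvalue of ∇²E_NN(x) has modulus in [μ−ε, L+ε] and exactly k eigenvalues are negative, where x*_NN is the critical point of E_NN with ‖x*_NN − x*‖₂ ≤ 4ε/μ. -/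

import Mathlib

/-- The Morse index of an endomorphism: the dimension of the span of the eigenspaces
associated with negative eigenvalues. -/
noncomputable def morseIndex {d : ℕ}
    (T : Module.End ℝ (EuclideanSpace ℝ (Fin d))) : ℕ :=
  Module.finrank ℝ ↥(⨆ t : ℝ, ⨆ _ : t < 0, Module.End.eigenspace T t)

open Module LinearMap InnerProductSpace

namespace Statement10Aux

variable {d : ℕ}

local notation "Euc" => EuclideanSpace ℝ (Fin d)

noncomputable def eb {T : Euc →L[ℝ] Euc} (hT : LinearMap.IsSymmetric (T : Euc →ₗ[ℝ] Euc)) :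
    OrthonormalBasis (Fin d) ℝ Euc :=
  hT.eigenvectorBasis finrank_euclideanSpace_fin

noncomputable def ev {T : Euc →L[ℝ] Euc} (hT : LinearMap.IsSymmetric (T : Euc →ₗ[ℝ] Euc)) :
    Fin d → ℝ :=
  hT.eigenvalues finrank_euclideanSpace_fin

lemma repr_apply {T : Euc →L[ℝ] Euc} (hT : LinearMap.IsSymmetric (T : Euc →ₗ[ℝ] Euc))
    (v : Euc) (i : Fin d) : (eb hT).repr (T v) i = ev hT i * (eb hT).repr v i :=
  hT.eigenvectorBasis_apply_self_apply finrank_euclideanSpace_fin v i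

lemma mem_span_iff (b : OrthonormalBasis (Fin d) ℝ Euc) (s : Set (Fin d)) (v : Euc) :
    v ∈ Submodule.span ℝ (⇑b '' s) ↔ ∀ i ∉ s, b.repr v i = 0 := by
  rw [← b.coe_toBasis, Basis.mem_span_image]
  simp only [Set.subset_def, Finset.mem_coe, Finsupp.mem_support_iff,
    b.coe_toBasis_repr_apply]
  exact forall_congr' fun i => by tauto

lemma inner_eq_sum (b : OrthonormalBasis (Fin d) ℝ Euc) (v w : Euc) :
    (inner ℝ v w : ℝ) = ∑ i, b.repr v i * b.repr w i := by
  rw [← b.sum_inner_mul_inner v w]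
  refine Finset.sum_congr rfl fun i _ => ?_
  rw [b.repr_apply_apply v i, b.repr_apply_apply w i, real_inner_comm v (b i)]

lemma norm_sq_eq_sum (b : OrthonormalBasis (Fin d) ℝ Euc) (v : Euc) :
    ‖v‖ ^ 2 = ∑ i, b.repr v i ^ 2 := by
  rw [← real_inner_self_eq_norm_sq, inner_eq_sum b]
  simp [sq]

lemma quad_eq_sum {T : Euc →L[ℝ] Euc} (hT : LinearMap.IsSymmetric (T : Euc →ₗ[ℝ] Euc))
    (v : Euc) : (inner ℝ (T v) v : ℝ) = ∑ i, ev hT i * (eb hT).repr v i ^ 2 := by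
  rw [inner_eq_sum (eb hT)]
  refine Finset.sum_congr rfl fun i _ => ?_
  rw [repr_apply hT]; ring

lemma quad_upper {T : Euc →L[ℝ] Euc} (hT : LinearMap.IsSymmetric (T : Euc →ₗ[ℝ] Euc))
    {s : Set (Fin d)} {c : ℝ} (hc : ∀ i ∈ s, ev hT i ≤ c) {v : Euc}
    (hv : v ∈ Submodule.span ℝ (⇑(eb hT) '' s)) : (inner ℝ (T v) v : ℝ) ≤ c * ‖v‖ ^ 2 := by
  rw [quad_eq_sum hT, norm_sq_eq_sum (eb hT), Finset.mul_sum]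
  refine Finset.sum_le_sum fun i _ => ?_
  by_cases his : i ∈ s
  · exact mul_le_mul_of_nonneg_right (hc i his) (sq_nonneg _)
  · rw [(mem_span_iff (eb hT) s v).mp hv i his]; simp

lemma quad_lower {T : Euc →L[ℝ] Euc} (hT : LinearMap.IsSymmetric (T : Euc →ₗ[ℝ] Euc))
    {s : Set (Fin d)} {c : ℝ} (hc : ∀ i ∈ s, c ≤ ev hT i) {v : Euc}
    (hv : v ∈ Submodule.span ℝ (⇑(eb hT) '' s)) : c * ‖v‖ ^ 2 ≤ (inner ℝ (T v) v : ℝ) := by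
  rw [quad_eq_sum hT, norm_sq_eq_sum (eb hT), Finset.mul_sum]
  refine Finset.sum_le_sum fun i _ => ?_
  by_cases his : i ∈ s
  · exact mul_le_mul_of_nonneg_right (hc i his) (sq_nonneg _)
  · rw [(mem_span_iff (eb hT) s v).mp hv i his]; simp

lemma dist_spectrum {T : Euc →L[ℝ] Euc} (hT : LinearMap.IsSymmetric (T : Euc →ₗ[ℝ] Euc))
    (t c : ℝ) (hc : 0 ≤ c) (h : ∀ i, c ≤ |t - ev hT i|) (v : Euc) :
    c * ‖v‖ ≤ ‖T v - t • v‖ := by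
  have hsq : (c * ‖v‖) ^ 2 ≤ ‖T v - t • v‖ ^ 2 := by
    rw [mul_pow, norm_sq_eq_sum (eb hT) v, norm_sq_eq_sum (eb hT) (T v - t • v),
      Finset.mul_sum]
    refine Finset.sum_le_sum fun i _ => ?_
    have hrepr : (eb hT).repr (T v - t • v) i = (ev hT i - t) * (eb hT).repr v i := by
      rw [map_sub, map_smul]
      simp only [PiLp.sub_apply, PiLp.smul_apply, smul_eq_mul, repr_apply hT]
      ring
    rw [hrepr, mul_pow]
    have h2 : c ^ 2 ≤ (ev hT i - t) ^ 2 := by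
      have := h i
      have habs : |ev hT i - t| = |t - ev hT i| := abs_sub_comm _ _
      nlinarith [abs_nonneg (t - ev hT i), sq_abs (ev hT i - t)]
    exact mul_le_mul_of_nonneg_right h2 (sq_nonneg _)
  have := Real.sqrt_le_sqrt hsq
  rwa [Real.sqrt_sq (by positivity), Real.sqrt_sq (norm_nonneg _)] at this

lemma eig_perturb {T S : Euc →L[ℝ] Euc} (hT : LinearMap.IsSymmetric (T : Euc →ₗ[ℝ] Euc))
    {a L ε : ℝ}
    (hTe : ∀ lam : ℝ, Module.End.HasEigenvalue (T : Euc →ₗ[ℝ] Euc) lam → a ≤ |lam| ∧ |lam| ≤ L)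
    (hε : ‖S - T‖ ≤ ε) {lam : ℝ}
    (hlam : Module.End.HasEigenvalue (S : Euc →ₗ[ℝ] Euc) lam) :
    a - ε ≤ |lam| ∧ |lam| ≤ L + ε := by
  obtain ⟨v, hv⟩ := hlam.exists_hasEigenvector
  have hSv : S v = lam • v := Module.End.mem_eigenspace_iff.mp hv.1
  have hvne : v ≠ 0 := hv.2
  have hd : 0 < d := by
    rcases Nat.eq_zero_or_pos d with h0 | h0
    · subst h0; exact absurd (Subsingleton.elim v 0) hvne
    · exact h0
  obtain ⟨i0, -, hmin⟩ := Finset.exists_min_image Finset.univ (fun i => |lam - ev hT i|)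
    ⟨⟨0, hd⟩, Finset.mem_univ _⟩
  set c := |lam - ev hT i0| with hc
  have hcle : c ≤ ε := by
    have h1 : c * ‖v‖ ≤ ‖T v - lam • v‖ :=
      dist_spectrum hT lam c (abs_nonneg _) (fun i => hmin i (Finset.mem_univ i)) v
    have h2 : T v - lam • v = -((S - T) v) := by
      rw [ContinuousLinearMap.sub_apply, hSv]; abel
    rw [h2, norm_neg] at h1
    have h3 : ‖(S - T) v‖ ≤ ε * ‖v‖ :=
      le_trans ((S - T).le_opNorm v) (mul_le_mul_of_nonneg_right hε (norm_nonneg _))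
    have hvpos : 0 < ‖v‖ := norm_pos_iff.mpr hvne
    exact le_of_mul_le_mul_right (h1.trans h3) hvpos
  have hmu := hTe (ev hT i0) (hT.hasEigenvalue_eigenvalues finrank_euclideanSpace_fin i0)
  have habs1 : |ev hT i0| - |lam| ≤ c := by
    have := abs_sub_abs_le_abs_sub (ev hT i0) lam
    rwa [abs_sub_comm] at this
  have habs2 : |lam| - |ev hT i0| ≤ c := abs_sub_abs_le_abs_sub lam (ev hT i0)
  constructor <;> [linarith [hmu.1]; linarith [hmu.2]]

lemma negSpace_eq {T : Euc →L[ℝ] Euc} (hT : LinearMap.IsSymmetric (T : Euc →ₗ[ℝ] Euc)) :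
    (⨆ t : ℝ, ⨆ _ : t < 0, Module.End.eigenspace (T : Euc →ₗ[ℝ] Euc) t)
      = Submodule.span ℝ (⇑(eb hT) '' {i | ev hT i < 0}) := by
  apply le_antisymm
  · refine iSup₂_le fun t ht v hv => ?_
    rw [mem_span_iff]
    intro i hi
    have hTv : T v = t • v := Module.End.mem_eigenspace_iff.mp hv
    have h1 : ev hT i * (eb hT).repr v i = t * (eb hT).repr v i := by
      rw [← repr_apply hT, hTv, map_smul]; simp
    have h2 : (ev hT i - t) * (eb hT).repr v i = 0 := by rw [sub_mul, h1]; ring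
    refine (mul_eq_zero.mp h2).resolve_left fun h => ?_
    have : ev hT i = t := by linarith [sub_eq_zero.mp h]
    exact hi (by simpa [Set.mem_setOf_eq, this] using ht)
  · rw [Submodule.span_le]
    rintro _ ⟨i, hi, rfl⟩
    have hmem : eb hT i ∈ Module.End.eigenspace (T : Euc →ₗ[ℝ] Euc) (ev hT i) :=
      Module.End.mem_eigenspace_iff.mpr (hT.apply_eigenvectorBasis finrank_euclideanSpace_fin i)
    exact Submodule.mem_iSup_of_mem (ev hT i) (Submodule.mem_iSup_of_mem hi hmem)

lemma index_le {T S : Euc →L[ℝ] Euc} (hT : LinearMap.IsSymmetric (T : Euc →ₗ[ℝ] Euc))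
    (hS : LinearMap.IsSymmetric (S : Euc →ₗ[ℝ] Euc)) {a bb ε : ℝ}
    (hTe : ∀ lam : ℝ, Module.End.HasEigenvalue (T : Euc →ₗ[ℝ] Euc) lam → a ≤ |lam|)
    (hSe : ∀ lam : ℝ, Module.End.HasEigenvalue (S : Euc →ₗ[ℝ] Euc) lam → bb ≤ |lam|)
    (hST : ‖S - T‖ ≤ ε) (hab : ε < a + bb) :
    morseIndex (S : Euc →ₗ[ℝ] Euc) ≤ morseIndex (T : Euc →ₗ[ℝ] Euc) := by
  unfold morseIndex
  rw [negSpace_eq hT, negSpace_eq hS]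
  set N := Submodule.span ℝ (⇑(eb hT) '' {i | ev hT i < 0}) with hN
  set NS := Submodule.span ℝ (⇑(eb hS) '' {i | ev hS i < 0}) with hNS
  let f : NS →ₗ[ℝ] N := (N.orthogonalProjectionOnto).toLinearMap.comp NS.subtype
  have hinj : Function.Injective f := by
    refine (injective_iff_map_eq_zero f).mpr fun v hv => ?_
    have hv' : (v : Euc) ∈ Nᗮ := Submodule.orthogonalProjectionOnto_eq_zero_iff.mp hv
    have hvP : (v : Euc) ∈ Submodule.span ℝ (⇑(eb hT) '' {i | ev hT i < 0}ᶜ) := by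
      rw [mem_span_iff]
      intro i hi
      have his : ev hT i < 0 := by simpa using hi
      have hbi : eb hT i ∈ N := Submodule.subset_span ⟨i, his, rfl⟩
      have h0 := (Submodule.mem_orthogonal N (v : Euc)).mp hv' (eb hT i) hbi
      rw [(eb hT).repr_apply_apply]; exact h0
    by_contra hvne
    have hvne' : (v : Euc) ≠ 0 := fun h => hvne (Subtype.ext h)
    have hnorm : 0 < ‖(v : Euc)‖ ^ 2 := by
      have := norm_pos_iff.mpr hvne'; positivity
    have h1 : a * ‖(v : Euc)‖ ^ 2 ≤ (inner ℝ (T (v : Euc)) (v : Euc) : ℝ) := by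
      refine quad_lower hT (fun i hi => ?_) hvP
      have h := hTe (ev hT i) (hT.hasEigenvalue_eigenvalues finrank_euclideanSpace_fin i)
      have : ¬ ev hT i < 0 := hi
      rwa [abs_of_nonneg (not_lt.mp this)] at h
    have h2 : (inner ℝ (S (v : Euc)) (v : Euc) : ℝ) ≤ -bb * ‖(v : Euc)‖ ^ 2 := by
      refine quad_upper hS (fun i hi => ?_) v.2
      have h := hSe (ev hS i) (hS.hasEigenvalue_eigenvalues finrank_euclideanSpace_fin i)
      have his : ev hS i < 0 := hi
      rw [abs_of_neg his] at h
      linarith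
    have h3 : (inner ℝ (T (v : Euc)) (v : Euc) : ℝ) - (inner ℝ (S (v : Euc)) (v : Euc) : ℝ)
        ≤ ε * ‖(v : Euc)‖ ^ 2 := by
      have hi1 : (inner ℝ ((T - S) (v : Euc)) (v : Euc) : ℝ) ≤ ‖(T - S) (v : Euc)‖ * ‖(v : Euc)‖ :=
        real_inner_le_norm _ _
      have hop : ‖(T - S) (v : Euc)‖ ≤ ε * ‖(v : Euc)‖ := by
        refine le_trans ((T - S).le_opNorm _) (mul_le_mul_of_nonneg_right ?_ (norm_nonneg _))
        rwa [norm_sub_rev]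
      have heq : (inner ℝ (T (v : Euc)) (v : Euc) : ℝ) - (inner ℝ (S (v : Euc)) (v : Euc) : ℝ)
          = (inner ℝ ((T - S) (v : Euc)) (v : Euc) : ℝ) := by
        rw [ContinuousLinearMap.sub_apply, inner_sub_left]
      rw [heq]
      nlinarith [norm_nonneg ((v : Euc))]
    nlinarith
  exact LinearMap.finrank_le_finrank_of_injective hinj

lemma index_eq {T S : Euc →L[ℝ] Euc} (hT : LinearMap.IsSymmetric (T : Euc →ₗ[ℝ] Euc))
    (hS : LinearMap.IsSymmetric (S : Euc →ₗ[ℝ] Euc)) {a bb ε : ℝ}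
    (hTe : ∀ lam : ℝ, Module.End.HasEigenvalue (T : Euc →ₗ[ℝ] Euc) lam → a ≤ |lam|)
    (hSe : ∀ lam : ℝ, Module.End.HasEigenvalue (S : Euc →ₗ[ℝ] Euc) lam → bb ≤ |lam|)
    (hST : ‖S - T‖ ≤ ε) (hab : ε < a + bb) :
    morseIndex (S : Euc →ₗ[ℝ] Euc) = morseIndex (T : Euc →ₗ[ℝ] Euc) := by
  have hTS : ‖T - S‖ ≤ ε := by rw [norm_sub_rev]; exact hST
  have hab' : ε < bb + a := by linarith
  exact le_antisymm (index_le hT hS hTe hSe hST hab) (index_le hS hT hSe hTe hTS hab')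

lemma gradient_eq_comp (f : Euc → ℝ) :
    gradient f = fun y => (toDual ℝ Euc).symm (fderiv ℝ f y) := rfl

lemma gradient_differentiable {f : Euc → ℝ} (hf : ContDiff ℝ 2 f) :
    Differentiable ℝ (gradient f) := by
  have h1 : ContDiff ℝ 1 (fderiv ℝ f) := hf.fderiv_right (by norm_num)
  rw [gradient_eq_comp]
  exact fun x => ((toDual ℝ Euc).symm.toContinuousLinearEquiv.differentiableAt).comp x
    ((h1.differentiable (by norm_num)) x)

lemma hessian_symm {f : Euc → ℝ} (hf : ContDiff ℝ 2 f) (x : Euc) :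
    LinearMap.IsSymmetric ((fderiv ℝ (gradient f) x : Euc →L[ℝ] Euc) : Euc →ₗ[ℝ] Euc) := by
  have hsym : IsSymmSndFDerivAt ℝ f x := (hf.contDiffAt).isSymmSndFDerivAt (by simp)
  have heq : fderiv ℝ (gradient f) x
      = ((toDual ℝ Euc).symm.toContinuousLinearEquiv : (Euc →L[ℝ] ℝ) ≃L[ℝ] Euc).toContinuousLinearMap.comp
        (fderiv ℝ (fderiv ℝ f) x) := by
    rw [gradient_eq_comp]
    exact ((toDual ℝ Euc).symm.toContinuousLinearEquiv.comp_fderiv (f := fderiv ℝ f) (x := x))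
  intro u v
  simp only [ContinuousLinearMap.coe_coe]
  have key : ∀ w z : Euc, (inner ℝ ((fderiv ℝ (gradient f) x) w) z : ℝ)
      = fderiv ℝ (fderiv ℝ f) x w z := by
    intro w z
    rw [heq]
    simp only [ContinuousLinearMap.comp_apply, ContinuousLinearEquiv.coe_coe,
      LinearIsometryEquiv.coe_toContinuousLinearEquiv]
    exact InnerProductSpace.toDual_symm_apply
  rw [key u v, real_inner_comm, key v u]
  exact hsym u v

lemma gradient_add_eq {f g : Euc → ℝ} (hf : ContDiff ℝ 2 f) (hg : ContDiff ℝ 2 g) :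
    gradient (fun z => f z + g z) = fun z => gradient f z + gradient g z := by
  funext z
  rw [gradient_eq_comp, gradient_eq_comp, gradient_eq_comp]
  have hdf : DifferentiableAt ℝ f z := (hf.differentiable (by norm_num)).differentiableAt
  have hdg : DifferentiableAt ℝ g z := (hg.differentiable (by norm_num)).differentiableAt
  simp only [fderiv_fun_add hdf hdg, map_add]

lemma hessian_add {f g : Euc → ℝ} (hf : ContDiff ℝ 2 f) (hg : ContDiff ℝ 2 g) (x : Euc) :
    fderiv ℝ (gradient (fun z => f z + g z)) x
      = fderiv ℝ (gradient f) x + fderiv ℝ (gradient g) x := by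
  rw [gradient_add_eq hf hg]
  exact fderiv_add ((gradient_differentiable hf).differentiableAt)
    ((gradient_differentiable hg).differentiableAt)

end Statement10Aux

/-- setup of Theorem 4.8: under the hypotheses of Theorem 4.6 with `x*`
an index-`k` critical point of `E`, the surrogate `E_NN = E + E_δ` has, on the ball of
radius `2δ/3` around any critical point `x*_NN` of `E_NN` with `‖x*_NN - x*‖ ≤ 4ε/μ`,
a `2M`-Lipschitz Hessian whose eigenvalue moduli lie in `[μ-ε, L+ε]` with exactly `k`
negative eigenvalues. -/
theorem statement10 {d k : ℕ} (E Eδ : EuclideanSpace ℝ (Fin d) → ℝ)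
    (hE : ContDiff ℝ 2 E) (hEδ : ContDiff ℝ 2 Eδ)
    (xstar : EuclideanSpace ℝ (Fin d)) (hcrit : gradient E xstar = 0)
    (δ M μ L ε : ℝ) (hδ : 0 < δ) (hM : 0 < M) (hμ : 0 < μ) (hμL : μ < L)
    (hεpos : 0 < ε)
    (hLip : ∀ x ∈ Metric.ball xstar δ, ∀ y ∈ Metric.ball xstar δ,
      ‖fderiv ℝ (gradient E) x - fderiv ℝ (gradient E) y‖ ≤ M * ‖x - y‖)
    (hmod : ∀ x ∈ Metric.ball xstar δ, ∀ lam : ℝ,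
      Module.End.HasEigenvalue
        ((fderiv ℝ (gradient E) x).toLinearMap) lam → μ ≤ |lam| ∧ |lam| ≤ L)
    (hindex : ∀ x ∈ Metric.ball xstar δ,
      morseIndex ((fderiv ℝ (gradient E) x).toLinearMap) = k)
    (hδLip : ∀ x ∈ Metric.ball xstar δ, ∀ y ∈ Metric.ball xstar δ,
      ‖fderiv ℝ (gradient Eδ) x - fderiv ℝ (gradient Eδ) y‖ ≤ ε * ‖x - y‖)
    (hδHess : ∀ x ∈ Metric.ball xstar δ, ‖fderiv ℝ (gradient Eδ) x‖ ≤ ε)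
    (hδGrad : ∀ x ∈ Metric.ball xstar δ, ‖gradient Eδ x‖ ≤ ε)
    (hεsmall : ε ≤ min (min (μ / 2) (μ ^ 2 / (32 * M))) (min (μ * δ / 12) M))
    (xnn : EuclideanSpace ℝ (Fin d))
    (hxnncrit : gradient (fun x => E x + Eδ x) xnn = 0)
    (hxnnclose : ‖xnn - xstar‖ ≤ 4 * ε / μ) :
    (∀ x ∈ Metric.ball xnn (2 * δ / 3), ∀ y ∈ Metric.ball xnn (2 * δ / 3),
        ‖fderiv ℝ (gradient (fun z => E z + Eδ z)) x
            - fderiv ℝ (gradient (fun z => E z + Eδ z)) y‖ ≤ 2 * M * ‖x - y‖) ∧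
      (∀ x ∈ Metric.ball xnn (2 * δ / 3), ∀ lam : ℝ,
        Module.End.HasEigenvalue
          ((fderiv ℝ (gradient (fun z => E z + Eδ z)) x).toLinearMap) lam →
            μ - ε ≤ |lam| ∧ |lam| ≤ L + ε) ∧
      (∀ x ∈ Metric.ball xnn (2 * δ / 3),
        morseIndex ((fderiv ℝ (gradient (fun z => E z + Eδ z)) x).toLinearMap) = k) := by
  have hεμ2 : ε ≤ μ / 2 := hεsmall.trans ((min_le_left _ _).trans (min_le_left _ _))
  have hεM : ε ≤ M := hεsmall.trans ((min_le_right _ _).trans (min_le_right _ _))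
  have hεδ12 : ε ≤ μ * δ / 12 := hεsmall.trans ((min_le_right _ _).trans (min_le_left _ _))
  have hball : ∀ x ∈ Metric.ball xnn (2 * δ / 3), x ∈ Metric.ball xstar δ := by
    intro x hx
    rw [Metric.mem_ball] at hx ⊢
    have h1 : dist x xstar ≤ dist x xnn + dist xnn xstar := dist_triangle _ _ _
    have h2 : dist xnn xstar ≤ δ / 3 := by
      rw [dist_eq_norm]
      refine hxnnclose.trans ?_
      rw [div_le_div_iff₀ hμ (by norm_num : (0:ℝ) < 3)]
      nlinarith
    linarith
  have hHg : ∀ x : EuclideanSpace ℝ (Fin d), fderiv ℝ (gradient (fun z => E z + Eδ z)) x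
      = fderiv ℝ (gradient E) x + fderiv ℝ (gradient Eδ) x :=
    fun x => Statement10Aux.hessian_add hE hEδ x
  have hgC : ContDiff ℝ 2 (fun z => E z + Eδ z) := hE.add hEδ
  refine ⟨?_, ?_, ?_⟩
  · intro x hx y hy
    rw [hHg x, hHg y]
    have h1 := hLip x (hball x hx) y (hball y hy)
    have h2 := hδLip x (hball x hx) y (hball y hy)
    have heq : (fderiv ℝ (gradient E) x + fderiv ℝ (gradient Eδ) x)
        - (fderiv ℝ (gradient E) y + fderiv ℝ (gradient Eδ) y)
        = (fderiv ℝ (gradient E) x - fderiv ℝ (gradient E) y)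
          + (fderiv ℝ (gradient Eδ) x - fderiv ℝ (gradient Eδ) y) := by abel
    rw [heq]
    refine (norm_add_le _ _).trans ?_
    nlinarith [norm_nonneg (x - y)]
  · intro x hx lam hlam
    rw [hHg x] at hlam
    have hsymT := Statement10Aux.hessian_symm hE x
    have hnormd : ‖(fderiv ℝ (gradient E) x + fderiv ℝ (gradient Eδ) x)
        - fderiv ℝ (gradient E) x‖ ≤ ε := by
      rw [add_sub_cancel_left]; exact hδHess x (hball x hx)
    exact Statement10Aux.eig_perturb hsymT (hmod x (hball x hx)) hnormd hlam
  · intro x hx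
    rw [hHg x]
    have hsymT := Statement10Aux.hessian_symm hE x
    have hsymS : LinearMap.IsSymmetric
        (((fderiv ℝ (gradient E) x + fderiv ℝ (gradient Eδ) x) :
          EuclideanSpace ℝ (Fin d) →L[ℝ] EuclideanSpace ℝ (Fin d)) :
          EuclideanSpace ℝ (Fin d) →ₗ[ℝ] EuclideanSpace ℝ (Fin d)) := by
      rw [← hHg x]; exact Statement10Aux.hessian_symm hgC x
    have hnormd : ‖(fderiv ℝ (gradient E) x + fderiv ℝ (gradient Eδ) x)
        - fderiv ℝ (gradient E) x‖ ≤ ε := by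
      rw [add_sub_cancel_left]; exact hδHess x (hball x hx)
    have hTe : ∀ lam : ℝ, Module.End.HasEigenvalue
        ((fderiv ℝ (gradient E) x).toLinearMap) lam → μ ≤ |lam| :=
      fun lam h => (hmod x (hball x hx) lam h).1
    have hSe : ∀ lam : ℝ, Module.End.HasEigenvalue
        ((fderiv ℝ (gradient E) x + fderiv ℝ (gradient Eδ) x).toLinearMap) lam →
          μ - ε ≤ |lam| :=
      fun lam h => (Statement10Aux.eig_perturb hsymT (hmod x (hball x hx)) hnormd h).1
    rw [Statement10Aux.index_eq hsymT hsymS hTe hSe hnormd (by linarith)]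
    exact hindex x (hball x hx)
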